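/- Assume ψ := q̂ + (τ_F/2)·Γ_LR is convex on Ω. Then for every parameter π ∈ (0, τ_F], the function φ³_π(x) := (8·τ_F/π)·((2/τ_F)·q̂(x) + 2·Γ_LR(x)) + 16·Γ_Δ(x) is self-concordant on Ω. -/

import Mathlib

open Filter

/- ## Auxiliary lemmas -/

private theorem my_fderiv_comp_const_add {E F : Type*} [NormedAddCommGroup E] [NormedSpace ℝ E]
    [NormedAddCommGroup F] [NormedSpace ℝ F] (f : E → F) (x y : E) :
    fderiv ℝ (fun z => f (x + z)) y = fderiv ℝ f (x + y) := by
  by_cases h : DifferentiableAt ℝ f (x + y)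
  · have ht : HasFDerivAt (fun z : E => x + z) (ContinuousLinearMap.id ℝ E) y :=
      (hasFDerivAt_id y).const_add x
    have h2 := (h.hasFDerivAt.comp y ht).fderiv
    exact h2.trans (ContinuousLinearMap.comp_id _)
  · have h2 : ¬ DifferentiableAt ℝ (fun z => f (x + z)) y := by
      intro hc
      have h3 : DifferentiableAt ℝ ((fun z => f (x + z)) ∘ (fun w : E => w - x)) (x + y) := by
        apply DifferentiableAt.comp
        · simpa using hc
        · exact (differentiable_id.sub_const x).differentiableAt
      have h4 : ((fun z => f (x + z)) ∘ (fun w : E => w - x)) = f := by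
        funext w; simp [Function.comp]
      rw [h4] at h3; exact h h3
    rw [fderiv_zero_of_not_differentiableAt h, fderiv_zero_of_not_differentiableAt h2]

private theorem my_iteratedFDeriv_comp_const_add {E F : Type*} [NormedAddCommGroup E]
    [NormedSpace ℝ E] [NormedAddCommGroup F] [NormedSpace ℝ F] (f : E → F) (x : E) (k : ℕ) :
    ∀ y, iteratedFDeriv ℝ k (fun z => f (x + z)) y = iteratedFDeriv ℝ k f (x + y) := by
  induction k with
  | zero => intro y; ext m; simp
  | succ k ih =>
    intro y; ext m
    rw [iteratedFDeriv_succ_apply_left, iteratedFDeriv_succ_apply_left]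
    have h1 : (iteratedFDeriv ℝ k fun z => f (x + z)) = fun z => iteratedFDeriv ℝ k f (x + z) :=
      funext ih
    rw [h1, my_fderiv_comp_const_add (iteratedFDeriv ℝ k f) x y]

/-- Directional iterated derivatives along a line. -/
private theorem my_line_lemma {E : Type*} [NormedAddCommGroup E] [NormedSpace ℝ E]
    (f : E → ℝ) {Ω : Set E} (hΩo : IsOpen Ω) (hf : ContDiffOn ℝ (⊤ : ℕ∞) f Ω)
    {x : E} (hx : x ∈ Ω) (v : E) (k : ℕ) :
    iteratedFDeriv ℝ k f x (fun _ => v) = iteratedDeriv k (fun t : ℝ => f (x + t • v)) 0 := by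
  set L : ℝ →L[ℝ] E := ContinuousLinearMap.smulRight (ContinuousLinearMap.id ℝ ℝ) v with hL
  set F : E → ℝ := fun z => f (x + z) with hF
  set s : Set E := (fun z => x + z) ⁻¹' Ω with hs
  have hso : IsOpen s := hΩo.preimage (continuous_const.add continuous_id)
  have h0s : (0 : E) ∈ s := by simp [hs, hx]
  have hFs : ContDiffOn ℝ (⊤ : ℕ∞) F s := by
    apply hf.comp ((contDiff_const.add contDiff_id).contDiffOn)
    exact fun z hz => hz
  have hUo : IsOpen (L ⁻¹' s) := hso.preimage L.continuous
  have h0U : L 0 ∈ s := by simpa using h0s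
  have key := L.iteratedFDerivWithin_comp_right hFs hso.uniqueDiffOn hUo.uniqueDiffOn h0U
      (i := k) (by exact_mod_cast le_top)
  have e1 : iteratedFDeriv ℝ k f x (fun _ => v) = iteratedFDeriv ℝ k F 0 (fun _ => v) := by
    rw [my_iteratedFDeriv_comp_const_add f x k 0]; simp
  have e2 : iteratedFDeriv ℝ k F 0 (fun _ => v)
      = iteratedFDerivWithin ℝ k F s 0 (fun _ => v) := by
    rw [iteratedFDerivWithin_of_isOpen k hso h0s]
  have e3 : iteratedFDerivWithin ℝ k (F ∘ L) (L ⁻¹' s) 0 (fun _ => (1:ℝ))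
      = iteratedFDerivWithin ℝ k F s (L 0) (fun _ => L 1) := by
    rw [key]; rfl
  have e4 : iteratedFDerivWithin ℝ k (F ∘ L) (L ⁻¹' s) 0 (fun _ => (1:ℝ))
      = iteratedFDeriv ℝ k (F ∘ L) 0 (fun _ => (1:ℝ)) := by
    rw [iteratedFDerivWithin_of_isOpen k hUo (by simpa using h0U)]
  have e5 : iteratedFDeriv ℝ k (F ∘ L) 0 (fun _ => (1:ℝ)) = iteratedDeriv k (F ∘ L) 0 := by
    rw [iteratedFDeriv_apply_eq_iteratedDeriv_mul_prod]; simp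
  have e6 : (F ∘ L) = fun t : ℝ => f (x + t • v) := by
    funext t; simp [hF, hL, Function.comp]
  have e7 : L 0 = 0 := by simp
  have e8 : L 1 = v := by simp [hL]
  rw [e1, e2, ← e6, ← e5, ← e4, e3, e7, e8]

private theorem my_chain {U : Set ℝ} (hU : IsOpen U) (h0 : (0:ℝ) ∈ U) {g g1 g2 g3 : ℝ → ℝ}
    (h1 : ∀ t ∈ U, HasDerivAt g (g1 t) t) (h2 : ∀ t ∈ U, HasDerivAt g1 (g2 t) t)
    (h3 : ∀ t ∈ U, HasDerivAt g2 (g3 t) t) :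
    iteratedDeriv 2 g 0 = g2 0 ∧ iteratedDeriv 3 g 0 = g3 0 := by
  have e1 : ∀ t ∈ U, deriv g t = g1 t := fun t ht => (h1 t ht).deriv
  have e2 : ∀ t ∈ U, iteratedDeriv 2 g t = g2 t := by
    intro t ht
    have hev : deriv g =ᶠ[nhds t] g1 := Filter.eventually_of_mem (hU.mem_nhds ht) e1
    have h4 : iteratedDeriv 2 g t = deriv (deriv g) t := by
      rw [iteratedDeriv_succ, iteratedDeriv_one]
    rw [h4, hev.deriv_eq, (h2 t ht).deriv]
  have hev2 : iteratedDeriv 2 g =ᶠ[nhds 0] g2 := Filter.eventually_of_mem (hU.mem_nhds h0) e2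
  refine ⟨e2 0 h0, ?_⟩
  rw [iteratedDeriv_succ, hev2.deriv_eq, (h3 0 h0).deriv]

private theorem hd_aff (a b t : ℝ) : HasDerivAt (fun t : ℝ => a + b * t) b t := by
  simpa using ((hasDerivAt_id t).const_mul b).const_add a

private theorem hd_log (a b t : ℝ) (h : a + b * t ≠ 0) :
    HasDerivAt (fun t : ℝ => Real.log (a + b * t)) (b / (a + b * t)) t :=
  (hd_aff a b t).log h

private theorem hd_inv (a b t : ℝ) (h : a + b * t ≠ 0) :
    HasDerivAt (fun t : ℝ => b / (a + b * t)) (-(b ^ 2 / (a + b * t) ^ 2)) t := by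
  have h2 := (hasDerivAt_const t b).div (hd_aff a b t) h
  refine h2.congr_deriv ?_
  ring

private theorem hd_inv2 (a b t : ℝ) (h : a + b * t ≠ 0) :
    HasDerivAt (fun t : ℝ => -(b ^ 2 / (a + b * t) ^ 2)) (2 * b ^ 3 / (a + b * t) ^ 3) t := by
  have h2 : ((a + b * t) ^ 2 : ℝ) ≠ 0 := pow_ne_zero _ h
  have h3 := ((hasDerivAt_const t (b ^ 2)).div ((hd_aff a b t).pow 2) h2).neg
  refine h3.congr_deriv ?_
  simp only [Pi.pow_apply]
  field_simp
  ring

private theorem hd_quadterm (q xi vi xj vj t : ℝ) :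
    HasDerivAt (fun t : ℝ => q * (xi + vi * t) * (xj + vj * t))
      (q * vi * (xj + vj * t) + q * (xi + vi * t) * vj) t := by
  have h1 := ((hd_aff xi vi t).const_mul q).mul (hd_aff xj vj t)
  exact h1

private theorem hd_linterm (ci xi vi t : ℝ) :
    HasDerivAt (fun t : ℝ => ci * (xi + vi * t)) (ci * vi) t :=
  (hd_aff xi vi t).const_mul ci

private theorem my_deriv_nonneg {U : Set ℝ} (hU : IsOpen U) (h0 : (0:ℝ) ∈ U) {h : ℝ → ℝ} {d : ℝ}
    (hd : HasDerivAt h d 0) (hm : MonotoneOn h U) : 0 ≤ d := by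
  have ht : Tendsto (slope h 0) (nhdsWithin 0 {y : ℝ | y ≠ 0}) (nhds d) :=
    hasDerivAt_iff_tendsto_slope.1 hd
  have ht2 : Tendsto (slope h 0) (nhdsWithin 0 (Set.Ioi 0)) (nhds d) :=
    ht.mono_left (nhdsWithin_mono _ (fun t ht => ne_of_gt ht))
  refine ge_of_tendsto ht2 ?_
  filter_upwards [self_mem_nhdsWithin, mem_nhdsWithin_of_mem_nhds (hU.mem_nhds h0)] with t ht1 ht2'
  rw [slope_def_field]
  apply div_nonneg
  · simpa using sub_nonneg.2 (hm h0 ht2' (le_of_lt ht1))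
  · simp only [Set.mem_Ioi] at ht1; linarith

private theorem my_rpow_super (x y : ℝ) (hx : 0 ≤ x) (hy : 0 ≤ y) :
    x ^ ((3:ℝ)/2) + y ^ ((3:ℝ)/2) ≤ (x + y) ^ ((3:ℝ)/2) := by
  have h1 := NNReal.add_rpow_le_rpow_add (x.toNNReal) (y.toNNReal) (p := (3:ℝ)/2) (by norm_num)
  have h2 := NNReal.coe_le_coe.2 h1
  rwa [NNReal.coe_add, NNReal.coe_rpow, NNReal.coe_rpow, NNReal.coe_rpow, NNReal.coe_add,
    Real.coe_toNNReal _ hx, Real.coe_toNNReal _ hy] at h2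

private theorem my_sum_rpow_super {ι : Type*} (s : Finset ι) (f : ι → ℝ) (hf : ∀ i, 0 ≤ f i) :
    ∑ i ∈ s, (f i) ^ ((3:ℝ)/2) ≤ (∑ i ∈ s, f i) ^ ((3:ℝ)/2) := by
  classical
  induction s using Finset.induction with
  | empty => simp
  | insert a s hns ih =>
    rw [Finset.sum_insert hns, Finset.sum_insert hns]
    calc (f a) ^ ((3:ℝ)/2) + ∑ i ∈ s, (f i) ^ ((3:ℝ)/2)
        ≤ (f a) ^ ((3:ℝ)/2) + (∑ i ∈ s, f i) ^ ((3:ℝ)/2) := by linarith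
      _ ≤ (f a + ∑ i ∈ s, f i) ^ ((3:ℝ)/2) :=
          my_rpow_super _ _ (hf a) (Finset.sum_nonneg fun i _ => hf i)

private theorem my_coef (c a : ℝ) (hc : 4 ≤ c) (ha : 0 ≤ a) :
    2 * c * a ^ ((3:ℝ)/2) ≤ (c * a) ^ ((3:ℝ)/2) := by
  have hc0 : (0:ℝ) < c := by linarith
  rw [Real.mul_rpow (le_of_lt hc0) ha]
  have h1 : c ^ ((3:ℝ)/2) = c * c ^ ((1:ℝ)/2) := by
    rw [show ((3:ℝ)/2) = 1 + 1/2 by norm_num, Real.rpow_add hc0, Real.rpow_one]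
  have h2 : (2:ℝ) ≤ c ^ ((1:ℝ)/2) := by
    have h3 : ((4:ℝ)) ^ ((1:ℝ)/2) = 2 := by
      rw [show (4:ℝ) = 2 ^ (2:ℕ) by norm_num, ← Real.rpow_natCast 2 2,
        ← Real.rpow_mul (by norm_num)]
      norm_num
    calc (2:ℝ) = (4:ℝ) ^ ((1:ℝ)/2) := h3.symm
      _ ≤ c ^ ((1:ℝ)/2) := Real.rpow_le_rpow (by norm_num) hc (by norm_num)
  have h4 : 2 * c ≤ c ^ ((3:ℝ)/2) := by
    rw [h1]
    nlinarith
  have h5 : (0:ℝ) ≤ a ^ ((3:ℝ)/2) := Real.rpow_nonneg ha _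
  nlinarith

private theorem my_cube (w d : ℝ) (hd : 0 < d) :
    |2 * w ^ 3 / d ^ 3| = 2 * (w ^ 2 / d ^ 2) ^ ((3:ℝ)/2) := by
  have h1 : (w ^ 2 / d ^ 2 : ℝ) = (|w| / d) ^ (2:ℕ) := by
    rw [div_pow, sq_abs]
  have h2 : (0:ℝ) ≤ |w| / d := div_nonneg (abs_nonneg w) hd.le
  rw [h1, ← Real.rpow_natCast (|w| / d) 2, ← Real.rpow_mul h2]
  norm_num
  rw [div_pow]
  rw [abs_div, abs_mul, abs_pow, abs_pow]
  rw [abs_of_pos hd, abs_of_pos (by norm_num : (0:ℝ) < 2)]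
  rw [mul_div_assoc]

/-- The numeric core of the self-concordance bound. -/
private theorem my_numeric {ι : Type*} [Fintype ι] (KA φ G2 T : ℝ) (hKA : 4 ≤ KA) (hφ : 0 ≤ φ)
    (a1 a2 b1 b2 : ι → ℝ) (ha1 : ∀ j, 0 ≤ a1 j) (ha2 : ∀ j, 0 ≤ a2 j)
    (hb1 : ∀ j, 0 ≤ b1 j) (hb2 : ∀ j, 0 ≤ b2 j)
    (hG2 : G2 = φ + KA * ∑ j, (a1 j + a2 j) + 16 * ∑ j, (b1 j + b2 j))
    (hT : |T| ≤ 2 * KA * ∑ j, (2 * (a1 j) ^ ((3:ℝ)/2) + 2 * (a2 j) ^ ((3:ℝ)/2))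
          + 16 * ∑ j, (2 * (b1 j) ^ ((3:ℝ)/2) + 2 * (b2 j) ^ ((3:ℝ)/2))) :
    0 ≤ G2 ∧ |T| ≤ 2 * G2 ^ ((3:ℝ)/2) := by
  have hKA0 : (0:ℝ) ≤ KA := by linarith
  have hsum1 : (0:ℝ) ≤ ∑ j, (a1 j + a2 j) :=
    Finset.sum_nonneg fun j _ => by have := ha1 j; have := ha2 j; linarith
  have hsum2 : (0:ℝ) ≤ ∑ j, (b1 j + b2 j) :=
    Finset.sum_nonneg fun j _ => by have := hb1 j; have := hb2 j; linarith
  have hG2nn : 0 ≤ G2 := by rw [hG2]; positivity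
  refine ⟨hG2nn, ?_⟩
  set S : ℝ := ∑ j, (KA * a1 j + KA * a2 j + 16 * b1 j + 16 * b2 j) with hS
  have hSnn : 0 ≤ S := Finset.sum_nonneg fun j _ => by
    have := ha1 j; have := ha2 j; have := hb1 j; have := hb2 j; nlinarith
  have step1 : 2 * KA * ∑ j, (2 * (a1 j) ^ ((3:ℝ)/2) + 2 * (a2 j) ^ ((3:ℝ)/2))
        + 16 * ∑ j, (2 * (b1 j) ^ ((3:ℝ)/2) + 2 * (b2 j) ^ ((3:ℝ)/2))
      = 2 * ∑ j, (2 * KA * (a1 j) ^ ((3:ℝ)/2) + 2 * KA * (a2 j) ^ ((3:ℝ)/2)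
          + 16 * (b1 j) ^ ((3:ℝ)/2) + 16 * (b2 j) ^ ((3:ℝ)/2)) := by
    rw [Finset.mul_sum, Finset.mul_sum, Finset.mul_sum, ← Finset.sum_add_distrib]
    apply Finset.sum_congr rfl
    intro j _; ring
  have step2 : ∑ j, (2 * KA * (a1 j) ^ ((3:ℝ)/2) + 2 * KA * (a2 j) ^ ((3:ℝ)/2)
          + 16 * (b1 j) ^ ((3:ℝ)/2) + 16 * (b2 j) ^ ((3:ℝ)/2))
      ≤ ∑ j, ((KA * a1 j) ^ ((3:ℝ)/2) + (KA * a2 j) ^ ((3:ℝ)/2)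
          + (16 * b1 j) ^ ((3:ℝ)/2) + (16 * b2 j) ^ ((3:ℝ)/2)) := by
    apply Finset.sum_le_sum
    intro j _
    have e1 := my_coef KA (a1 j) hKA (ha1 j)
    have e2 := my_coef KA (a2 j) hKA (ha2 j)
    have e3 := my_coef 16 (b1 j) (by norm_num) (hb1 j)
    have e4 := my_coef 16 (b2 j) (by norm_num) (hb2 j)
    have n1 : 0 ≤ (b1 j) ^ ((3:ℝ)/2) := Real.rpow_nonneg (hb1 j) _
    have n2 : 0 ≤ (b2 j) ^ ((3:ℝ)/2) := Real.rpow_nonneg (hb2 j) _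
    linarith
  have step3 : ∑ j, ((KA * a1 j) ^ ((3:ℝ)/2) + (KA * a2 j) ^ ((3:ℝ)/2)
          + (16 * b1 j) ^ ((3:ℝ)/2) + (16 * b2 j) ^ ((3:ℝ)/2))
      ≤ ∑ j, (KA * a1 j + KA * a2 j + 16 * b1 j + 16 * b2 j) ^ ((3:ℝ)/2) := by
    apply Finset.sum_le_sum
    intro j _
    have n1 : 0 ≤ KA * a1 j := by have := ha1 j; positivity
    have n2 : 0 ≤ KA * a2 j := by have := ha2 j; positivity
    have n3 : 0 ≤ (16:ℝ) * b1 j := by have := hb1 j; positivity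
    have n4 : 0 ≤ (16:ℝ) * b2 j := by have := hb2 j; positivity
    calc (KA * a1 j) ^ ((3:ℝ)/2) + (KA * a2 j) ^ ((3:ℝ)/2)
          + (16 * b1 j) ^ ((3:ℝ)/2) + (16 * b2 j) ^ ((3:ℝ)/2)
        ≤ (KA * a1 j + KA * a2 j) ^ ((3:ℝ)/2) + (16 * b1 j) ^ ((3:ℝ)/2)
            + (16 * b2 j) ^ ((3:ℝ)/2) := by
          have := my_rpow_super (KA * a1 j) (KA * a2 j) n1 n2; linarith
      _ ≤ (KA * a1 j + KA * a2 j) ^ ((3:ℝ)/2) + (16 * b1 j + 16 * b2 j) ^ ((3:ℝ)/2) := by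
          have := my_rpow_super (16 * b1 j) (16 * b2 j) n3 n4; linarith
      _ ≤ (KA * a1 j + KA * a2 j + (16 * b1 j + 16 * b2 j)) ^ ((3:ℝ)/2) :=
          my_rpow_super _ _ (by linarith) (by linarith)
      _ = (KA * a1 j + KA * a2 j + 16 * b1 j + 16 * b2 j) ^ ((3:ℝ)/2) := by
          congr 1
          ring
  have step4 : ∑ j, (KA * a1 j + KA * a2 j + 16 * b1 j + 16 * b2 j) ^ ((3:ℝ)/2)
      ≤ S ^ ((3:ℝ)/2) := by
    apply my_sum_rpow_super
    intro j
    have := ha1 j; have := ha2 j; have := hb1 j; have := hb2 j; nlinarith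
  have hSG : S ≤ G2 := by
    have e : KA * ∑ j, (a1 j + a2 j) + 16 * ∑ j, (b1 j + b2 j) = S := by
      rw [hS, Finset.mul_sum, Finset.mul_sum, ← Finset.sum_add_distrib]
      apply Finset.sum_congr rfl; intro j _; ring
    rw [hG2]; linarith
  have step5 : S ^ ((3:ℝ)/2) ≤ G2 ^ ((3:ℝ)/2) := Real.rpow_le_rpow hSnn hSG (by norm_num)
  calc |T| ≤ _ := hT
    _ = 2 * ∑ j, (2 * KA * (a1 j) ^ ((3:ℝ)/2) + 2 * KA * (a2 j) ^ ((3:ℝ)/2)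
          + 16 * (b1 j) ^ ((3:ℝ)/2) + 16 * (b2 j) ^ ((3:ℝ)/2)) := step1
    _ ≤ 2 * S ^ ((3:ℝ)/2) := by
        have := le_trans step2 (le_trans step3 step4); linarith
    _ ≤ 2 * G2 ^ ((3:ℝ)/2) := by linarith

set_option maxHeartbeats 2000000 in
/-- If `ψ := q̂ + (τ_F/2)·Γ_LR` is convex on `Ω`, then for every
`π ∈ (0, τ_F]` the function
`φ³_π(x) := (8·τ_F/π)·((2/τ_F)·q̂(x) + 2·Γ_LR(x)) + 16·Γ_Δ(x)` is self-concordant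
on `Ω` (in the directional-derivative sense). -/
theorem stmt_16 (n : ℕ) (Q : Matrix (Fin n) (Fin n) ℝ) (hQ : Q.IsSymm)
    (c xL xR : EuclideanSpace ℝ (Fin n)) (Δ τF : ℝ) (hΔ : 0 < Δ) (hτF : 0 < τF)
    (qhat ΓLR ΓΔ : EuclideanSpace ℝ (Fin n) → ℝ)
    (hqhat : ∀ x, qhat x = (1 / 2) * ∑ i, ∑ j, Q i j * x i * x j + ∑ i, c i * x i)
    (hΓLR : ∀ x, ΓLR x = -∑ j, (Real.log (x j - xL j) + Real.log (xR j - x j)))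
    (hΓΔ : ∀ x, ΓΔ x = -∑ j, (Real.log (Δ + x j) + Real.log (Δ - x j)))
    (B S Ω : Set (EuclideanSpace ℝ (Fin n)))
    (hB : B = {x | ∀ j, xL j < x j ∧ x j < xR j})
    (hS : S = {x | ∀ j, -Δ < x j ∧ x j < Δ})
    (hΩ : Ω = B ∩ S) (hne : Ω.Nonempty)
    (hψ : ConvexOn ℝ Ω (fun x => qhat x + (τF / 2) * ΓLR x)) :
    ∀ π : ℝ, 0 < π → π ≤ τF →
      ∀ x ∈ Ω, ∀ v : EuclideanSpace ℝ (Fin n),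
        0 ≤ iteratedFDeriv ℝ 2
          (fun y => (8 * τF / π) * ((2 / τF) * qhat y + 2 * ΓLR y) + 16 * ΓΔ y) x ![v, v] ∧
        |iteratedFDeriv ℝ 3
          (fun y => (8 * τF / π) * ((2 / τF) * qhat y + 2 * ΓLR y) + 16 * ΓΔ y) x ![v, v, v]| ≤
          2 * (iteratedFDeriv ℝ 2
            (fun y => (8 * τF / π) * ((2 / τF) * qhat y + 2 * ΓLR y) + 16 * ΓΔ y) x
              ![v, v]) ^ ((3 : ℝ) / 2) := by
  intro π hπ0 hπτ x hx v
  classical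
  have hproj : ∀ j : Fin n, ContDiff ℝ (⊤:ℕ∞) (fun y : EuclideanSpace ℝ (Fin n) => y j) :=
    fun j => (EuclideanSpace.proj (𝕜 := ℝ) j).contDiff
  have hcont : ∀ j : Fin n, Continuous (fun y : EuclideanSpace ℝ (Fin n) => y j) :=
    fun j => (hproj j).continuous
  have hmemΩ : ∀ y ∈ Ω, ∀ j, xL j < y j ∧ y j < xR j ∧ -Δ < y j ∧ y j < Δ := by
    intro y hy j
    rw [hΩ] at hy
    obtain ⟨h1, h2⟩ := hy
    rw [hB] at h1; rw [hS] at h2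
    exact ⟨(h1 j).1, (h1 j).2, (h2 j).1, (h2 j).2⟩
  have hΩopen : IsOpen Ω := by
    rw [hΩ, hB, hS]
    apply IsOpen.inter
    · have e : {y : EuclideanSpace ℝ (Fin n) | ∀ j, xL j < y j ∧ y j < xR j}
          = ⋂ j, ({y : EuclideanSpace ℝ (Fin n) | xL j < y j} ∩ {y | y j < xR j}) := by
        ext y; simp [Set.mem_iInter, forall_and]
      rw [e]
      exact isOpen_iInter_of_finite fun j =>
        (isOpen_lt continuous_const (hcont j)).inter (isOpen_lt (hcont j) continuous_const)
    · have e : {y : EuclideanSpace ℝ (Fin n) | ∀ j, -Δ < y j ∧ y j < Δ}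
          = ⋂ j, ({y : EuclideanSpace ℝ (Fin n) | -Δ < y j} ∩ {y | y j < Δ}) := by
        ext y; simp [Set.mem_iInter, forall_and]
      rw [e]
      exact isOpen_iInter_of_finite fun j =>
        (isOpen_lt continuous_const (hcont j)).inter (isOpen_lt (hcont j) continuous_const)
  have hqhatCD : ContDiffOn ℝ (⊤:ℕ∞) qhat Ω := by
    have e : qhat = fun y : EuclideanSpace ℝ (Fin n) =>
        (1/2) * ∑ i, ∑ j, Q i j * y i * y j + ∑ i, c i * y i := funext hqhat
    rw [e]
    apply ContDiff.contDiffOn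
    apply ContDiff.add
    · apply ContDiff.mul contDiff_const
      apply ContDiff.sum; intro i _; apply ContDiff.sum; intro j _
      exact (contDiff_const.mul (hproj i)).mul (hproj j)
    · apply ContDiff.sum; intro i _
      exact contDiff_const.mul (hproj i)
  have hΓLRCD : ContDiffOn ℝ (⊤:ℕ∞) ΓLR Ω := by
    have e : ΓLR = fun y : EuclideanSpace ℝ (Fin n) =>
        -∑ j, (Real.log (y j - xL j) + Real.log (xR j - y j)) := funext hΓLR
    rw [e]
    apply ContDiffOn.neg
    apply ContDiffOn.sum; intro j _
    apply ContDiffOn.add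
    · exact ContDiffOn.log (((hproj j).sub contDiff_const).contDiffOn)
        (fun y hy => sub_ne_zero_of_ne (ne_of_gt (hmemΩ y hy j).1))
    · exact ContDiffOn.log ((contDiff_const.sub (hproj j)).contDiffOn)
        (fun y hy => sub_ne_zero_of_ne (ne_of_gt (hmemΩ y hy j).2.1))
  have hΓΔCD : ContDiffOn ℝ (⊤:ℕ∞) ΓΔ Ω := by
    have e : ΓΔ = fun y : EuclideanSpace ℝ (Fin n) =>
        -∑ j, (Real.log (Δ + y j) + Real.log (Δ - y j)) := funext hΓΔ
    rw [e]
    apply ContDiffOn.neg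
    apply ContDiffOn.sum; intro j _
    apply ContDiffOn.add
    · refine ContDiffOn.log ((contDiff_const.add (hproj j)).contDiffOn) (fun y hy => ?_)
      have h5 := (hmemΩ y hy j).2.2.1
      exact ne_of_gt (by linarith)
    · refine ContDiffOn.log ((contDiff_const.sub (hproj j)).contDiffOn) (fun y hy => ?_)
      have h5 := (hmemΩ y hy j).2.2.2
      exact ne_of_gt (by linarith)
  set Φ : EuclideanSpace ℝ (Fin n) → ℝ :=
    fun y => (8 * τF / π) * ((2 / τF) * qhat y + 2 * ΓLR y) + 16 * ΓΔ y with hΦ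
  have hΦCD : ContDiffOn ℝ (⊤:ℕ∞) Φ Ω := by
    rw [hΦ]
    exact (contDiffOn_const.mul ((contDiffOn_const.mul hqhatCD).add
      (contDiffOn_const.mul hΓLRCD))).add (contDiffOn_const.mul hΓΔCD)
  set U : Set ℝ := (fun t : ℝ => x + t • v) ⁻¹' Ω with hUdef
  have hUopen : IsOpen U := hΩopen.preimage (continuous_const.add (continuous_id.smul continuous_const))
  have h0U : (0:ℝ) ∈ U := by
    simp only [hUdef, Set.mem_preimage, zero_smul, add_zero]; exact hx
  have hposU : ∀ t ∈ U, ∀ j : Fin n,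
      0 < x j - xL j + v j * t ∧ 0 < xR j - x j + -v j * t
      ∧ 0 < Δ + x j + v j * t ∧ 0 < Δ - x j + -v j * t := by
    intro t ht j
    have h1 : x + t • v ∈ Ω := ht
    have h2 := hmemΩ _ h1 j
    simp only [PiLp.add_apply, PiLp.smul_apply, smul_eq_mul] at h2
    obtain ⟨a1, a2, a3, a4⟩ := h2
    have hc : t * v j = v j * t := mul_comm _ _
    rw [hc] at a1 a2 a3 a4
    exact ⟨by linarith, by linarith, by linarith, by linarith⟩
  have hpos0 : ∀ j : Fin n, 0 < x j - xL j ∧ 0 < xR j - x j ∧ 0 < Δ + x j ∧ 0 < Δ - x j := by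
    intro j
    obtain ⟨a1, a2, a3, a4⟩ := hmemΩ x hx j
    exact ⟨by linarith, by linarith, by linarith, by linarith⟩
  -- the pieces
  set A0 : ℝ → ℝ := fun t => 1 / 2 * ∑ i, ∑ j, Q i j * (x i + v i * t) * (x j + v j * t)
      + ∑ i, c i * (x i + v i * t) with hA0d
  set A1 : ℝ → ℝ := fun t => 1 / 2 * ∑ i, ∑ j,
        (Q i j * v i * (x j + v j * t) + Q i j * (x i + v i * t) * v j)
      + ∑ i, c i * v i with hA1d
  set A2 : ℝ → ℝ := fun t => 1 / 2 * ∑ i, ∑ j, (Q i j * v i * v j + Q i j * v i * v j)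
      + ∑ _i : Fin n, (0:ℝ) with hA2d
  set A3 : ℝ → ℝ := fun t => 1 / 2 * ∑ _i : Fin n, ∑ _j : Fin n, (0:ℝ)
      + ∑ _i : Fin n, (0:ℝ) with hA3d
  set B0 : ℝ → ℝ := fun t => -∑ j, (Real.log (x j - xL j + v j * t)
      + Real.log (xR j - x j + -v j * t)) with hB0d
  set B1 : ℝ → ℝ := fun t => -∑ j, (v j / (x j - xL j + v j * t)
      + -v j / (xR j - x j + -v j * t)) with hB1d
  set B2 : ℝ → ℝ := fun t => -∑ j, (-(v j ^ 2 / (x j - xL j + v j * t) ^ 2)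
      + -((-v j) ^ 2 / (xR j - x j + -v j * t) ^ 2)) with hB2d
  set B3 : ℝ → ℝ := fun t => -∑ j, (2 * v j ^ 3 / (x j - xL j + v j * t) ^ 3
      + 2 * (-v j) ^ 3 / (xR j - x j + -v j * t) ^ 3) with hB3d
  set C0 : ℝ → ℝ := fun t => -∑ j, (Real.log (Δ + x j + v j * t)
      + Real.log (Δ - x j + -v j * t)) with hC0d
  set C1 : ℝ → ℝ := fun t => -∑ j, (v j / (Δ + x j + v j * t)
      + -v j / (Δ - x j + -v j * t)) with hC1d
  set C2 : ℝ → ℝ := fun t => -∑ j, (-(v j ^ 2 / (Δ + x j + v j * t) ^ 2)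
      + -((-v j) ^ 2 / (Δ - x j + -v j * t) ^ 2)) with hC2d
  set C3 : ℝ → ℝ := fun t => -∑ j, (2 * v j ^ 3 / (Δ + x j + v j * t) ^ 3
      + 2 * (-v j) ^ 3 / (Δ - x j + -v j * t) ^ 3) with hC3d
  have hA01 : ∀ t : ℝ, HasDerivAt A0 (A1 t) t := by
    intro t
    simp only [hA0d, hA1d]
    exact ((HasDerivAt.fun_sum (fun i _ => HasDerivAt.fun_sum (fun j _ =>
      hd_quadterm (Q i j) (x i) (v i) (x j) (v j) t))).const_mul (1/2)).add
      (HasDerivAt.fun_sum (fun i _ => hd_linterm (c i) (x i) (v i) t))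
  have hA12 : ∀ t : ℝ, HasDerivAt A1 (A2 t) t := by
    intro t
    simp only [hA1d, hA2d]
    refine HasDerivAt.add (HasDerivAt.const_mul _ (HasDerivAt.fun_sum fun i _ =>
      HasDerivAt.fun_sum fun j _ => ?_)) (HasDerivAt.fun_sum fun i _ => hasDerivAt_const t (c i * v i))
    exact ((hd_aff (x j) (v j) t).const_mul (Q i j * v i)).add
      (((hd_aff (x i) (v i) t).const_mul (Q i j)).mul_const (v j))
  have hA23 : ∀ t : ℝ, HasDerivAt A2 (A3 t) t := by
    intro t
    simp only [hA2d, hA3d]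
    exact HasDerivAt.add (HasDerivAt.const_mul _ (HasDerivAt.fun_sum fun i _ =>
      HasDerivAt.fun_sum fun j _ => hasDerivAt_const t _))
      (HasDerivAt.fun_sum fun i _ => hasDerivAt_const t (0:ℝ))
  have hB01 : ∀ t ∈ U, HasDerivAt B0 (B1 t) t := by
    intro t ht
    simp only [hB0d, hB1d]
    refine HasDerivAt.neg (HasDerivAt.fun_sum fun j _ => ?_)
    obtain ⟨d1, d2, _, _⟩ := hposU t ht j
    exact (hd_log _ _ _ d1.ne').add (hd_log _ _ _ d2.ne')
  have hB12 : ∀ t ∈ U, HasDerivAt B1 (B2 t) t := by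
    intro t ht
    simp only [hB1d, hB2d]
    refine HasDerivAt.neg (HasDerivAt.fun_sum fun j _ => ?_)
    obtain ⟨d1, d2, _, _⟩ := hposU t ht j
    exact (hd_inv _ _ _ d1.ne').add (hd_inv _ _ _ d2.ne')
  have hB23 : ∀ t ∈ U, HasDerivAt B2 (B3 t) t := by
    intro t ht
    simp only [hB2d, hB3d]
    refine HasDerivAt.neg (HasDerivAt.fun_sum fun j _ => ?_)
    obtain ⟨d1, d2, _, _⟩ := hposU t ht j
    exact (hd_inv2 _ _ _ d1.ne').add (hd_inv2 _ _ _ d2.ne')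
  have hC01 : ∀ t ∈ U, HasDerivAt C0 (C1 t) t := by
    intro t ht
    simp only [hC0d, hC1d]
    refine HasDerivAt.neg (HasDerivAt.fun_sum fun j _ => ?_)
    obtain ⟨_, _, d3, d4⟩ := hposU t ht j
    exact (hd_log _ _ _ d3.ne').add (hd_log _ _ _ d4.ne')
  have hC12 : ∀ t ∈ U, HasDerivAt C1 (C2 t) t := by
    intro t ht
    simp only [hC1d, hC2d]
    refine HasDerivAt.neg (HasDerivAt.fun_sum fun j _ => ?_)
    obtain ⟨_, _, d3, d4⟩ := hposU t ht j
    exact (hd_inv _ _ _ d3.ne').add (hd_inv _ _ _ d4.ne')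
  have hC23 : ∀ t ∈ U, HasDerivAt C2 (C3 t) t := by
    intro t ht
    simp only [hC2d, hC3d]
    refine HasDerivAt.neg (HasDerivAt.fun_sum fun j _ => ?_)
    obtain ⟨_, _, d3, d4⟩ := hposU t ht j
    exact (hd_inv2 _ _ _ d3.ne').add (hd_inv2 _ _ _ d4.ne')
  -- rewriting sums along the line
  have s1 : ∀ t : ℝ, ∑ i, ∑ j, Q i j * (x i + t * v i) * (x j + t * v j)
      = ∑ i, ∑ j, Q i j * (x i + v i * t) * (x j + v j * t) :=
    fun t => Finset.sum_congr rfl fun i _ => Finset.sum_congr rfl fun j _ => by ring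
  have s2 : ∀ t : ℝ, ∑ i, c i * (x i + t * v i) = ∑ i, c i * (x i + v i * t) :=
    fun t => Finset.sum_congr rfl fun i _ => by ring
  have s3 : ∀ t : ℝ, ∑ j, (Real.log (x j + t * v j - xL j) + Real.log (xR j - (x j + t * v j)))
      = ∑ j, (Real.log (x j - xL j + v j * t) + Real.log (xR j - x j + -v j * t)) :=
    fun t => Finset.sum_congr rfl fun j _ => by
      rw [show x j + t * v j - xL j = x j - xL j + v j * t by ring,
        show xR j - (x j + t * v j) = xR j - x j + -v j * t by ring]
  have s4 : ∀ t : ℝ, ∑ j, (Real.log (Δ + (x j + t * v j)) + Real.log (Δ - (x j + t * v j)))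
      = ∑ j, (Real.log (Δ + x j + v j * t) + Real.log (Δ - x j + -v j * t)) :=
    fun t => Finset.sum_congr rfl fun j _ => by
      rw [show Δ + (x j + t * v j) = Δ + x j + v j * t by ring,
        show Δ - (x j + t * v j) = Δ - x j + -v j * t by ring]
  -- g pieces
  set g0 : ℝ → ℝ := fun t => (8 * τF / π) * ((2 / τF) * A0 t + 2 * B0 t) + 16 * C0 t with hg0d
  set g1 : ℝ → ℝ := fun t => (8 * τF / π) * ((2 / τF) * A1 t + 2 * B1 t) + 16 * C1 t with hg1d
  set g2 : ℝ → ℝ := fun t => (8 * τF / π) * ((2 / τF) * A2 t + 2 * B2 t) + 16 * C2 t with hg2d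
  set g3 : ℝ → ℝ := fun t => (8 * τF / π) * ((2 / τF) * A3 t + 2 * B3 t) + 16 * C3 t with hg3d
  have hg01 : ∀ t ∈ U, HasDerivAt g0 (g1 t) t := by
    intro t ht
    simp only [hg0d, hg1d]
    exact ((((hA01 t).const_mul (2/τF)).add ((hB01 t ht).const_mul 2)).const_mul
      (8*τF/π)).add ((hC01 t ht).const_mul 16)
  have hg12 : ∀ t ∈ U, HasDerivAt g1 (g2 t) t := by
    intro t ht
    simp only [hg1d, hg2d]
    exact ((((hA12 t).const_mul (2/τF)).add ((hB12 t ht).const_mul 2)).const_mul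
      (8*τF/π)).add ((hC12 t ht).const_mul 16)
  have hg23 : ∀ t ∈ U, HasDerivAt g2 (g3 t) t := by
    intro t ht
    simp only [hg2d, hg3d]
    exact ((((hA23 t).const_mul (2/τF)).add ((hB23 t ht).const_mul 2)).const_mul
      (8*τF/π)).add ((hC23 t ht).const_mul 16)
  obtain ⟨hI2, hI3⟩ := my_chain hUopen h0U hg01 hg12 hg23
  have lineEq : (fun t : ℝ => Φ (x + t • v)) = g0 := by
    funext t
    simp only [hΦ, hg0d, hA0d, hB0d, hC0d]
    rw [hqhat, hΓLR, hΓΔ]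
    simp only [PiLp.add_apply, PiLp.smul_apply, smul_eq_mul]
    rw [s1 t, s2 t, s3 t, s4 t]
  have key2 := my_line_lemma Φ hΩopen hΦCD hx v 2
  have key3 := my_line_lemma Φ hΩopen hΦCD hx v 3
  rw [lineEq, hI2] at key2
  rw [lineEq, hI3] at key3
  -- convexity along the line
  set ψ0 : ℝ → ℝ := fun t => A0 t + τF / 2 * B0 t with hψ0d
  set ψ1 : ℝ → ℝ := fun t => A1 t + τF / 2 * B1 t with hψ1d
  set ψ2 : ℝ → ℝ := fun t => A2 t + τF / 2 * B2 t with hψ2d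
  have hψ01 : ∀ t ∈ U, HasDerivAt ψ0 (ψ1 t) t := by
    intro t ht
    simp only [hψ0d, hψ1d]
    exact (hA01 t).add ((hB01 t ht).const_mul (τF/2))
  have hψ12 : ∀ t ∈ U, HasDerivAt ψ1 (ψ2 t) t := by
    intro t ht
    simp only [hψ1d, hψ2d]
    exact (hA12 t).add ((hB12 t ht).const_mul (τF/2))
  have hconv : ConvexOn ℝ U ψ0 := by
    have hAff := hψ.comp_affineMap (AffineMap.lineMap x (x + v) : ℝ →ᵃ[ℝ] EuclideanSpace ℝ (Fin n))
    have hcoe : ⇑(AffineMap.lineMap x (x + v) : ℝ →ᵃ[ℝ] EuclideanSpace ℝ (Fin n))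
        = fun t : ℝ => x + t • v := by
      funext t
      simp [AffineMap.lineMap_apply, add_sub_cancel_left, add_comm]
    rw [hcoe] at hAff
    have hfeq : ((fun y => qhat y + τF / 2 * ΓLR y) ∘ fun t : ℝ => x + t • v) = ψ0 := by
      funext t
      simp only [Function.comp, hψ0d, hA0d, hB0d]
      rw [hqhat, hΓLR]
      simp only [PiLp.add_apply, PiLp.smul_apply, smul_eq_mul]
      rw [s1 t, s2 t, s3 t]
    rw [hfeq] at hAff
    exact hAff
  have hmono : MonotoneOn (deriv ψ0) U :=
    hconv.monotoneOn_deriv (fun t ht => (hψ01 t ht).differentiableAt)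
  have hder : HasDerivAt (deriv ψ0) (ψ2 0) 0 := by
    refine (hψ12 0 h0U).congr_of_eventuallyEq ?_
    exact Filter.eventually_of_mem (hUopen.mem_nhds h0U) (fun t ht => (hψ01 t ht).deriv)
  have hψ2nn : 0 ≤ ψ2 0 := my_deriv_nonneg hUopen h0U hder hmono
  -- evaluations at 0
  have hB2v : B2 0 = ∑ j, (v j ^ 2 / (x j - xL j) ^ 2 + v j ^ 2 / (xR j - x j) ^ 2) := by
    simp only [hB2d]
    rw [Finset.sum_congr rfl (fun j _ => show
        (-(v j ^ 2 / (x j - xL j + v j * 0) ^ 2) + -((-v j) ^ 2 / (xR j - x j + -v j * 0) ^ 2))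
        = -(v j ^ 2 / (x j - xL j) ^ 2 + v j ^ 2 / (xR j - x j) ^ 2) from by ring),
      Finset.sum_neg_distrib, neg_neg]
  have hC2v : C2 0 = ∑ j, (v j ^ 2 / (Δ + x j) ^ 2 + v j ^ 2 / (Δ - x j) ^ 2) := by
    simp only [hC2d]
    rw [Finset.sum_congr rfl (fun j _ => show
        (-(v j ^ 2 / (Δ + x j + v j * 0) ^ 2) + -((-v j) ^ 2 / (Δ - x j + -v j * 0) ^ 2))
        = -(v j ^ 2 / (Δ + x j) ^ 2 + v j ^ 2 / (Δ - x j) ^ 2) from by ring),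
      Finset.sum_neg_distrib, neg_neg]
  have hB3v : B3 0 = -∑ j, (2 * v j ^ 3 / (x j - xL j) ^ 3
      + 2 * (-v j) ^ 3 / (xR j - x j) ^ 3) := by
    simp only [hB3d]
    congr 1
    exact Finset.sum_congr rfl fun j _ => by ring
  have hC3v : C3 0 = -∑ j, (2 * v j ^ 3 / (Δ + x j) ^ 3
      + 2 * (-v j) ^ 3 / (Δ - x j) ^ 3) := by
    simp only [hC3d]
    congr 1
    exact Finset.sum_congr rfl fun j _ => by ring
  have hA30 : A3 0 = 0 := by simp [hA3d]
  -- bounds on the third derivative sums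
  have hTB : |B3 0| ≤ ∑ j, (2 * (v j ^ 2 / (x j - xL j) ^ 2) ^ ((3:ℝ)/2)
      + 2 * (v j ^ 2 / (xR j - x j) ^ 2) ^ ((3:ℝ)/2)) := by
    rw [hB3v, abs_neg]
    refine (Finset.abs_sum_le_sum_abs _ _).trans (Finset.sum_le_sum ?_)
    intro j _
    obtain ⟨d1, d2, _, _⟩ := hpos0 j
    have e1 := my_cube (v j) (x j - xL j) d1
    have e2 := my_cube (-v j) (xR j - x j) d2
    rw [show ((-v j) ^ 2 : ℝ) = v j ^ 2 from by ring] at e2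
    calc |2 * v j ^ 3 / (x j - xL j) ^ 3 + 2 * (-v j) ^ 3 / (xR j - x j) ^ 3|
        ≤ |2 * v j ^ 3 / (x j - xL j) ^ 3| + |2 * (-v j) ^ 3 / (xR j - x j) ^ 3| := abs_add_le _ _
      _ = 2 * (v j ^ 2 / (x j - xL j) ^ 2) ^ ((3:ℝ)/2)
          + 2 * (v j ^ 2 / (xR j - x j) ^ 2) ^ ((3:ℝ)/2) := by rw [e1, e2]
  have hTC : |C3 0| ≤ ∑ j, (2 * (v j ^ 2 / (Δ + x j) ^ 2) ^ ((3:ℝ)/2)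
      + 2 * (v j ^ 2 / (Δ - x j) ^ 2) ^ ((3:ℝ)/2)) := by
    rw [hC3v, abs_neg]
    refine (Finset.abs_sum_le_sum_abs _ _).trans (Finset.sum_le_sum ?_)
    intro j _
    obtain ⟨_, _, d3, d4⟩ := hpos0 j
    have e1 := my_cube (v j) (Δ + x j) d3
    have e2 := my_cube (-v j) (Δ - x j) d4
    rw [show ((-v j) ^ 2 : ℝ) = v j ^ 2 from by ring] at e2
    calc |2 * v j ^ 3 / (Δ + x j) ^ 3 + 2 * (-v j) ^ 3 / (Δ - x j) ^ 3|
        ≤ |2 * v j ^ 3 / (Δ + x j) ^ 3| + |2 * (-v j) ^ 3 / (Δ - x j) ^ 3| := abs_add_le _ _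
      _ = 2 * (v j ^ 2 / (Δ + x j) ^ 2) ^ ((3:ℝ)/2)
          + 2 * (v j ^ 2 / (Δ - x j) ^ 2) ^ ((3:ℝ)/2) := by rw [e1, e2]
  -- relations between g2, g3 and the pieces
  have hg2v : g2 0 = (16 / π) * ψ2 0 + (8 * τF / π) * B2 0 + 16 * C2 0 := by
    simp only [hg2d, hψ2d]
    field_simp
    ring
  have hg3v : g3 0 = 2 * (8 * τF / π) * B3 0 + 16 * C3 0 := by
    simp only [hg3d]
    rw [hA30]
    ring
  -- final numeric inequality
  have hKA : (4:ℝ) ≤ 8 * τF / π := by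
    rw [le_div_iff₀ hπ0]
    nlinarith
  have hφnn : 0 ≤ (16 / π) * ψ2 0 := by
    apply mul_nonneg _ hψ2nn
    positivity
  have hG2eq : g2 0 = (16 / π) * ψ2 0
      + (8 * τF / π) * ∑ j, (v j ^ 2 / (x j - xL j) ^ 2 + v j ^ 2 / (xR j - x j) ^ 2)
      + 16 * ∑ j, (v j ^ 2 / (Δ + x j) ^ 2 + v j ^ 2 / (Δ - x j) ^ 2) := by
    rw [hg2v, hB2v, hC2v]
  have hTeq : |g3 0| ≤ 2 * (8 * τF / π) * ∑ j, (2 * (v j ^ 2 / (x j - xL j) ^ 2) ^ ((3:ℝ)/2)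
        + 2 * (v j ^ 2 / (xR j - x j) ^ 2) ^ ((3:ℝ)/2))
      + 16 * ∑ j, (2 * (v j ^ 2 / (Δ + x j) ^ 2) ^ ((3:ℝ)/2)
        + 2 * (v j ^ 2 / (Δ - x j) ^ 2) ^ ((3:ℝ)/2)) := by
    rw [hg3v]
    have c1 : (0:ℝ) ≤ 2 * (8 * τF / π) := by positivity
    calc |2 * (8 * τF / π) * B3 0 + 16 * C3 0|
        ≤ |2 * (8 * τF / π) * B3 0| + |16 * C3 0| := abs_add_le _ _
      _ = 2 * (8 * τF / π) * |B3 0| + 16 * |C3 0| := by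
          rw [abs_mul (2 * (8 * τF / π)) (B3 0), abs_mul 16 (C3 0), abs_of_nonneg c1,
            abs_of_nonneg (by norm_num : (0:ℝ) ≤ 16)]
      _ ≤ _ := by
          have := hTB; have := hTC
          have h16 : (0:ℝ) ≤ 16 := by norm_num
          nlinarith [hTB, hTC]
  obtain ⟨r1, r2⟩ := my_numeric (ι := Fin n) (8 * τF / π) ((16 / π) * ψ2 0) (g2 0) (g3 0)
    hKA hφnn
    (fun j => v j ^ 2 / (x j - xL j) ^ 2) (fun j => v j ^ 2 / (xR j - x j) ^ 2)
    (fun j => v j ^ 2 / (Δ + x j) ^ 2) (fun j => v j ^ 2 / (Δ - x j) ^ 2)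
    (fun j => by positivity) (fun j => by positivity) (fun j => by positivity)
    (fun j => by positivity) hG2eq hTeq
  have hvv2 : (![v, v] : Fin 2 → EuclideanSpace ℝ (Fin n)) = fun _ => v := by
    funext i; fin_cases i <;> rfl
  have hvv3 : (![v, v, v] : Fin 3 → EuclideanSpace ℝ (Fin n)) = fun _ => v := by
    funext i; fin_cases i <;> rfl
  rw [hvv3, hvv2, key2, key3]
  exact ⟨r1, r2⟩
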